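/- arXiv:1605.07775 — 5 statements merged into one kernel-verified Lean document; each statement's English description precedes it below -/
import Mathlib

section
/- For any nested Lie bracket [B_{n₁·…·n_r}] = [...[[B_{n₁},B_{n₂}],B_{n₃}],...,B_{n_r}] of homogeneous differential operators B_{n_j} = x^{n_j¹} y^{n_j²}(p_{n_j} x∂_x + q_{n_j} y∂_y), the result has the form x^{Σn_j¹} y^{Σn_j²}(P(n) x∂_x + Q(n) y∂_y), where P(n) and Q(n) are polynomials with integer coefficients in the p_{n_j}, q_{n_j} which are homogeneous of degree r (the length of the word), satisfying the recursion P(n·n') = (|n'|¹ − n¹) p_n P(n') + |n'|² q_n P(n') − n² p_n Q(n'), Q(n·n') = (|n'|² − n²) q_n Q(n') + |n'|¹ p_n Q(n') − n¹ q_n P(n'), where |n'|^j denotes the sum of the j-th components of the letters of n'. -/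
open MvPolynomial

/-- Planar polynomial vector fields: a pair `(A₁, A₂)` represents `A₁ ∂_x + A₂ ∂_y`. -/
abbrev PlanarVF := MvPolynomial (Fin 2) ℂ × MvPolynomial (Fin 2) ℂ

/-- The Lie bracket `[A,B] = A∘B − B∘A` of derivations, in components. -/
noncomputable def lieVF (A B : PlanarVF) : PlanarVF :=
  (A.1 * pderiv 0 B.1 + A.2 * pderiv 1 B.1 - B.1 * pderiv 0 A.1 - B.2 * pderiv 1 A.1,
   A.1 * pderiv 0 B.2 + A.2 * pderiv 1 B.2 - B.1 * pderiv 0 A.2 - B.2 * pderiv 1 A.2)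

/-- A letter together with its coefficients: `((n¹,n²),(p_n,q_n))` represents the
homogeneous operator `B_n = x^{n¹} y^{n²} (p_n x∂_x + q_n y∂_y)`. -/
abbrev Letter := (ℕ × ℕ) × (ℂ × ℂ)

/-- The homogeneous differential operator attached to a letter. -/
noncomputable def Bop (a : Letter) : PlanarVF :=
  (C a.2.1 * X 0 ^ (a.1.1 + 1) * X 1 ^ a.1.2, C a.2.2 * X 0 ^ a.1.1 * X 1 ^ (a.1.2 + 1))

/-- The nested Lie bracket `[B_{n₁·…·n_r}]` of the operators of a (nonempty) word. -/
noncomputable def nestedBracket : Letter → List Letter → PlanarVF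
  | a, [] => Bop a
  | a, b :: t => lieVF (Bop a) (nestedBracket b t)

/-- Sum of the first components of the letters of a word, `|n|¹`. -/
def S1 (w : List Letter) : ℕ := (w.map fun a => a.1.1).sum

/-- Sum of the second components of the letters of a word, `|n|²`. -/
def S2 (w : List Letter) : ℕ := (w.map fun a => a.1.2).sum

/-- The coefficient polynomials `(P(n), Q(n))`, defined by the recursion
`P(n·n') = (|n'|¹ − n¹) p_n P(n') + |n'|² q_n P(n') − n² p_n Q(n')`,
`Q(n·n') = (|n'|² − n²) q_n Q(n') + |n'|¹ p_n Q(n') − n¹ q_n P(n')`. -/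
def PQ : Letter → List Letter → ℂ × ℂ
  | a, [] => (a.2.1, a.2.2)
  | a, b :: t =>
    let r := PQ b t
    ((((S1 (b :: t) : ℂ)) - (a.1.1 : ℂ)) * a.2.1 * r.1 + (S2 (b :: t) : ℂ) * a.2.2 * r.1
        - (a.1.2 : ℂ) * a.2.1 * r.2,
     (((S2 (b :: t) : ℂ)) - (a.1.2 : ℂ)) * a.2.2 * r.2 + (S1 (b :: t) : ℂ) * a.2.1 * r.2
        - (a.1.1 : ℂ) * a.2.2 * r.1)

lemma pd01 : pderiv (R := ℂ) (0 : Fin 2) (X 1) = 0 := pderiv_X_of_ne (by decide)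
lemma pd10 : pderiv (R := ℂ) (1 : Fin 2) (X 0) = 0 := pderiv_X_of_ne (by decide)

set_option maxHeartbeats 2000000 in
lemma key (m k s1 s2 : ℕ) (p q P Q : ℂ) :
    lieVF (C p * X 0 ^ (m+1) * X 1 ^ k, C q * X 0 ^ m * X 1 ^ (k+1))
          (C P * X 0 ^ (s1+1) * X 1 ^ s2, C Q * X 0 ^ s1 * X 1 ^ (s2+1)) =
    (C (((s1:ℂ) - m) * p * P + (s2:ℂ) * q * P - (k:ℂ) * p * Q) * X 0 ^ (m+s1+1) * X 1 ^ (k+s2),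
     C (((s2:ℂ) - k) * q * Q + (s1:ℂ) * p * Q - (m:ℂ) * q * P) * X 0 ^ (m+s1) * X 1 ^ (k+s2+1)) := by
  obtain _ | m := m <;> obtain _ | k := k <;> obtain _ | s1 := s1 <;> obtain _ | s2 := s2 <;>
  · simp only [lieVF, pderiv_mul, Derivation.leibniz_pow, pderiv_X_self, pd01, pd10, pderiv_C,
      Prod.mk.injEq, map_add, map_sub, map_mul, map_natCast, map_ofNat, C_1, C_0, Nat.cast_succ,
      Nat.succ_sub_one, Nat.zero_sub, pow_zero, zero_smul, nsmul_eq_mul, Nat.cast_zero, Nat.cast_add,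
      Nat.cast_one, mul_zero, zero_mul, mul_one, one_mul, add_zero, zero_add, sub_zero, Nat.cast_ofNat,
      smul_eq_mul]
    constructor <;> push_cast <;> ring

lemma S1_cons (a : Letter) (w : List Letter) : S1 (a :: w) = a.1.1 + S1 w := by simp [S1]
lemma S2_cons (a : Letter) (w : List Letter) : S2 (a :: w) = a.1.2 + S2 w := by simp [S2]

lemma S1_map (t : ℂ) (w : List Letter) :
    S1 (w.map fun b => (b.1, (t * b.2.1, t * b.2.2))) = S1 w := by
  simp [S1, List.map_map, Function.comp_def]

lemma S2_map (t : ℂ) (w : List Letter) :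
    S2 (w.map fun b => (b.1, (t * b.2.1, t * b.2.2))) = S2 w := by
  simp [S2, List.map_map, Function.comp_def]

/-- Any nested Lie bracket of homogeneous differential operators has the form
`x^{Σ n_j¹} y^{Σ n_j²} (P(n) x∂_x + Q(n) y∂_y)`, where `P(n)`, `Q(n)` satisfy the
recursion of `PQ` and are homogeneous of degree `r` (the length of the word) in the
coefficients `p_{n_j}, q_{n_j}`. -/
theorem nested_bracket_form (a : Letter) (w : List Letter) :
    (nestedBracket a w =
      (C (PQ a w).1 * X 0 ^ (S1 (a :: w) + 1) * X 1 ^ S2 (a :: w),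
       C (PQ a w).2 * X 0 ^ S1 (a :: w) * X 1 ^ (S2 (a :: w) + 1))) ∧
    (∀ t : ℂ,
      PQ (a.1, (t * a.2.1, t * a.2.2)) (w.map fun b => (b.1, (t * b.2.1, t * b.2.2))) =
        (t ^ (w.length + 1) * (PQ a w).1, t ^ (w.length + 1) * (PQ a w).2)) := by
  induction w generalizing a with
  | nil =>
    constructor
    · simp [nestedBracket, Bop, PQ, S1, S2]
    · intro t; simp [PQ]
  | cons b u ih =>
    obtain ⟨ih1, ih2⟩ := ih b
    constructor
    · have h : nestedBracket a (b :: u) = lieVF (Bop a) (nestedBracket b u) := rfl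
      rw [h, ih1]
      show lieVF (C a.2.1 * X 0 ^ (a.1.1 + 1) * X 1 ^ a.1.2,
            C a.2.2 * X 0 ^ a.1.1 * X 1 ^ (a.1.2 + 1)) _ = _
      rw [key a.1.1 a.1.2 (S1 (b :: u)) (S2 (b :: u)) a.2.1 a.2.2 (PQ b u).1 (PQ b u).2]
      have e1 : S1 (a :: b :: u) = a.1.1 + S1 (b :: u) := S1_cons _ _
      have e2 : S2 (a :: b :: u) = a.1.2 + S2 (b :: u) := S2_cons _ _
      simp only [PQ, e1, e2]
    · intro t
      have := ih2 t
      simp only [List.map_cons, PQ, S1_cons, S2_cons, S1_map, S2_map, this, List.length_cons,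
        List.length_map, Prod.mk.injEq]
      constructor <;> ring
end

section
/- The length-3 correction mould value at a resonant word is Carr^{n₁·n₂·n₃} = 1/(ω(n₁)(ω(n₁)+ω(n₂))) when ω(n₁)+ω(n₂)+ω(n₃) = 0, ω(n₁) ≠ 0, and ω(n₁)+ω(n₂) ≠ 0, given the mould values in lengths 0, 1, and 2 and the variance recursion. -/
/-- The length-1 universal correction function: `C₁(z) = 1` if `z = 0`, else `0`. -/
noncomputable def C1 (z : ℂ) : ℂ := if z = 0 then 1 else 0

/-- The length-2 universal correction function:
`C₂(z₁,z₂) = −1/z₁` if `z₁ + z₂ = 0` and `z₁ ≠ 0`, else `0`. -/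
noncomputable def C2 (z1 z2 : ℂ) : ℂ := if z1 + z2 = 0 ∧ z1 ≠ 0 then -(1 / z1) else 0

/-- Given the mould values in lengths `0`, `1`, `2` and the variance recursion
`ω(n₁)·Carr^{n₁,n₂,n₃} + Carr^{(n₁+n₂),n₃} = Carr^{n₁·n₃}·Carr^{n₂} + Carr^{n₁}·Carr^{n₂·n₃}`,
the length-3 correction mould on a resonant word (whose letters are non-resonant) with
`ω(n₁)+ω(n₂)+ω(n₃) = 0`, `ω(n₁) ≠ 0`, `ω(n₁)+ω(n₂) ≠ 0` is
`Carr^{n₁·n₂·n₃} = 1/(ω(n₁)(ω(n₁)+ω(n₂)))`. -/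
theorem length_three_correction_mould (Carr3 : ℂ → ℂ → ℂ → ℂ)
    (hvar : ∀ z1 z2 z3 : ℂ,
      z1 * Carr3 z1 z2 z3 + C2 (z1 + z2) z3 = C2 z1 z3 * C1 z2 + C1 z1 * C2 z2 z3) :
    ∀ z1 z2 z3 : ℂ, z1 + z2 + z3 = 0 → z1 ≠ 0 → z1 + z2 ≠ 0 → z2 ≠ 0 →
      Carr3 z1 z2 z3 = 1 / (z1 * (z1 + z2)) := by
  intro z1 z2 z3 hsum h1 h12 h2
  have h := hvar z1 z2 z3
  rw [C1, C1, C2] at h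
  simp only [if_neg h1, if_neg h2, mul_zero, zero_mul, add_zero, hsum, h12, if_true, ne_eq, not_false_eq_true, and_self] at h
  have : z1 * Carr3 z1 z2 z3 = 1 / (z1 + z2) := by linear_combination h
  field_simp at this ⊢
  linear_combination this
end

section
/- The correction mould vanishes on non-resonant words: if ω(n₁·…·n_r) = Σ_j ω(n_j) ≠ 0, then Carr^{n₁·…·n_r} = 0. -/
/-- A mould over the alphabet of complex weights: a function on words (lists of weights). -/
abbrev Mould := List ℂ → ℂ

/-- The unit mould for composition: `I^n = 1` if `n` has length `1`, else `0`. -/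
noncomputable def unitMould : Mould := fun w => if w.length = 1 then 1 else 0

/-- Mould composition: `(M∘N)^n = Σ_k Σ* M^{‖ω₁‖·…·‖ω_k‖} N^{ω₁}⋯N^{ω_k}`, the inner sum
over decompositions of `n` into `k` consecutive (nonempty) subwords, `‖ω‖` being the
letter obtained by summing the letters of `ω`. -/
noncomputable def mcomp (M N : Mould) : Mould := fun w =>
  ∑ c : Composition w.length,
    M ((w.splitWrtComposition c).map List.sum) * ((w.splitWrtComposition c).map N).prod

/-- Iterated self-composition `F^{∘r}` (with `F^{∘0} = F`). -/
noncomputable def miter (F : Mould) : ℕ → Mould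
  | 0 => F
  | k + 1 => mcomp F (miter F k)

lemma split_single {α : Type*} (l : List α) (h : 0 < l.length) :
    l.splitWrtComposition (Composition.single l.length h) = [l] := by
  simp [List.splitWrtComposition, Composition.single, List.splitWrtCompositionAux]

lemma sum_map_sum (w : List ℂ) (c : Composition w.length) :
    ((w.splitWrtComposition c).map List.sum).sum = w.sum := by
  rw [← List.sum_flatten, List.flatten_splitWrtComposition]

lemma miter_eq_unit (M : Mould) (hM0 : M [] = 0)
    (hMnr : ∀ w : List ℂ, w.sum ≠ 0 → M w = 0) :
    ∀ (n : ℕ) (w : List ℂ), w.sum ≠ 0 →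
      miter (fun v => unitMould v - M v) n w = unitMould w := by
  intro n
  induction n with
  | zero => intro w hw; simp [miter, hMnr w hw]
  | succ k ih =>
    intro w hw
    classical
    have hw0 : 0 < w.length := by
      cases w with
      | nil => simp at hw
      | cons a t => simp
    have key : ∀ c : Composition w.length,
        (fun v => unitMould v - M v) ((w.splitWrtComposition c).map List.sum)
          * ((w.splitWrtComposition c).map (miter (fun v => unitMould v - M v) k)).prod
        = if c = Composition.single w.length hw0 then unitMould w else 0 := by
      intro c
      have hsum : ((w.splitWrtComposition c).map List.sum).sum = w.sum := sum_map_sum w c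
      have hMz : M ((w.splitWrtComposition c).map List.sum) = 0 :=
        hMnr _ (by rw [hsum]; exact hw)
      have hlen : ((w.splitWrtComposition c).map List.sum).length = c.length := by
        simp [List.length_splitWrtComposition]
      by_cases hc : c = Composition.single w.length hw0
      · subst hc
        rw [split_single w hw0]
        simp only [List.map_cons, List.map_nil, List.prod_cons, List.prod_nil, mul_one]
        rw [ih w hw]
        have : M [w.sum] = 0 := hMnr _ (by simpa using hw)
        simp [unitMould, this]
      · have hc1 : c.length ≠ 1 :=
          fun h1 => hc ((Composition.eq_single_iff_length hw0).mpr h1)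
        simp [hc, unitMould, hlen, hc1, hMz]
    show (∑ c : Composition w.length, _) = _
    rw [Finset.sum_congr rfl (fun c _ => key c), Finset.sum_ite_eq'
      Finset.univ (Composition.single w.length hw0) (fun _ => unitMould w)]
    simp

/-- The correction mould vanishes on non-resonant words: if `M` is a prenormal-form mould
(vanishing on the empty word and on non-resonant words) and `Carr` satisfies
`I^n − Carr^n = ((I − M)^{∘(l(n)+k)})^n` for all `k`, then `ω(n) ≠ 0` implies
`Carr^n = 0`. -/
theorem correction_vanishes_on_nonresonant (M Carr : Mould)
    (hM0 : M [] = 0) (hMnr : ∀ w : List ℂ, w.sum ≠ 0 → M w = 0)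
    (hCarr : ∀ (w : List ℂ) (k : ℕ),
      unitMould w - Carr w = miter (fun v => unitMould v - M v) (w.length + k) w) :
    ∀ w : List ℂ, w.sum ≠ 0 → Carr w = 0 := by
  intro w hw
  have h := hCarr w 0
  rw [miter_eq_unit M hM0 hMnr _ w hw] at h
  linear_combination -h
end

section
/- If a word n = n₁·…·n_r (r ≥ 2) contains a letter n_j with ω(n_j) = 0, then Carr^{n} = 0. -/
/-- Splitting a list along the single-block composition gives back the list. -/
theorem splitWrt_single (w : List ℂ) (hw : 0 < w.length) :
    w.splitWrtComposition (Composition.single w.length hw) = [w] := by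
  have hlen : (w.splitWrtComposition (Composition.single w.length hw)).length = 1 := by
    rw [List.length_splitWrtComposition, Composition.single_length]
  obtain ⟨p, hp⟩ := List.length_eq_one_iff.mp hlen
  have h2 := List.flatten_splitWrtComposition w (Composition.single w.length hw)
  rw [hp] at h2 ⊢
  simp only [List.flatten, List.append_eq, List.append_nil] at h2
  rw [h2]

/-- Mould composition evaluated at a one-letter word. -/
theorem mcomp_single (G H : Mould) (a : ℂ) : mcomp G H [a] = G [a] * H [a] := by
  have hpos : 0 < ([a] : List ℂ).length := by simp
  have huniq : ∀ c : Composition ([a] : List ℂ).length,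
      c = Composition.single ([a] : List ℂ).length hpos := by
    intro c
    rw [Composition.eq_single_iff_length]
    have h1 := c.length_le
    have h2 := c.length_pos_of_pos hpos
    simp only [List.length_singleton] at h1
    omega
  show (∑ c : Composition ([a] : List ℂ).length,
    G (([a].splitWrtComposition c).map List.sum) *
      (([a].splitWrtComposition c).map H).prod) = _
  rw [Fintype.sum_eq_single (Composition.single ([a] : List ℂ).length hpos)
    (fun c hc => absurd (huniq c) hc), splitWrt_single [a] hpos]
  simp

/-- If a word `n = n₁·…·n_r` with `r ≥ 2` contains a letter of weight zero, then
`Carr^n = 0`. Here `Carr` satisfies `Carr^∅ = 0`, equals `1` on resonant letters and `0`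
on non-resonant letters, vanishes on non-resonant words, and satisfies the composition
identity `I^n − Carr^n = ((I − M)^{∘(l(n)+k)})^n` for a prenormal mould `M`. -/
theorem correction_vanishes_on_words_with_resonant_letter (M Carr : Mould)
    (hM0 : M [] = 0) (hMnr : ∀ w : List ℂ, w.sum ≠ 0 → M w = 0)
    (hC0 : Carr [] = 0)
    (hC1 : ∀ a : ℂ, Carr [a] = if a = 0 then 1 else 0)
    (hCnr : ∀ w : List ℂ, w.sum ≠ 0 → Carr w = 0)
    (hCarr : ∀ (w : List ℂ) (k : ℕ),
      unitMould w - Carr w = miter (fun v => unitMould v - M v) (w.length + k) w) :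
    ∀ w : List ℂ, 2 ≤ w.length → (0 : ℂ) ∈ w → Carr w = 0 := by
  set F : Mould := fun v => unitMould v - M v with hFdef
  -- the iterates stabilize
  have hS : ∀ (w : List ℂ) (m : ℕ), w.length ≤ m →
      miter F m w = unitMould w - Carr w := by
    intro w m hm
    obtain ⟨k, rfl⟩ := Nat.exists_eq_add_of_le hm
    exact (hCarr w k).symm
  -- F vanishes at the resonant letter
  have hF0 : F [(0 : ℂ)] = 0 := by
    have h1 := hCarr [(0 : ℂ)] 0
    have h2 : miter F (([(0 : ℂ)] : List ℂ).length + 0) [(0 : ℂ)]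
        = mcomp F F [(0 : ℂ)] := by
      norm_num [miter]
    rw [h2, mcomp_single, hC1] at h1
    simp only [unitMould, List.length_singleton, if_pos rfl, if_true, sub_self] at h1
    exact mul_self_eq_zero.mp h1.symm
  -- the fixed-point identity
  have hfix : ∀ w : List ℂ, unitMould w - Carr w =
      ∑ c : Composition w.length,
        F ((w.splitWrtComposition c).map List.sum) *
          ((w.splitWrtComposition c).map (fun v => unitMould v - Carr v)).prod := by
    intro w
    rw [hCarr w 1]
    show mcomp F (miter F w.length) w = _
    refine Finset.sum_congr rfl fun c _ => ?_
    congr 1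
    refine congrArg List.prod (List.map_congr_left fun p hp => ?_)
    apply hS
    have hmem : p.length ∈ (w.splitWrtComposition c).map List.length :=
      List.mem_map_of_mem hp
    rw [List.map_length_splitWrtComposition] at hmem
    calc p.length ≤ c.blocks.sum :=
          List.single_le_sum (fun _ _ => Nat.zero_le _) _ hmem
      _ = w.length := c.blocks_sum
  -- main induction
  have key : ∀ n : ℕ, ∀ w : List ℂ, w.length ≤ n → (0 : ℂ) ∈ w →
      unitMould w - Carr w = 0 := by
    intro n
    induction n with
    | zero =>
      intro w hw hmem
      rw [Nat.le_zero, List.length_eq_zero_iff] at hw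
      subst hw
      simp at hmem
    | succ n ih =>
      intro w hw hmem
      rcases Nat.lt_or_ge w.length 2 with hl | hl
      · have hpos : 0 < w.length := List.length_pos_iff.mpr (List.ne_nil_of_mem hmem)
        have h1 : w.length = 1 := by omega
        obtain ⟨a, rfl⟩ := List.length_eq_one_iff.mp h1
        have ha : a = 0 := by simp at hmem; exact hmem.symm
        subst ha
        simp [unitMould, hC1]
      · have hwpos : 0 < w.length := by omega
        have hu : unitMould w = 0 := by
          simp only [unitMould, ite_eq_right_iff]
          intro h; omega
        by_cases hsum : w.sum = 0
        · rw [hfix w]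
          apply Finset.sum_eq_zero
          intro c _
          by_cases hc : c = Composition.single w.length hwpos
          · subst hc
            rw [splitWrt_single w hwpos]
            have h2 : (([w] : List (List ℂ)).map List.sum) = [(0 : ℂ)] := by
              simp [hsum]
            rw [h2, hF0, zero_mul]
          · -- some strictly shorter piece contains the letter 0
            obtain ⟨p, hpmem, hp0⟩ := List.mem_flatten.mp
              ((List.flatten_splitWrtComposition w c).symm ▸ hmem)
            have hb : p.length ∈ c.blocks := by
              have h1 : p.length ∈ (w.splitWrtComposition c).map List.length :=
                List.mem_map_of_mem hpmem
              rwa [List.map_length_splitWrtComposition] at h1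
            have hplt : p.length < w.length := by
              have hlen2 : 2 ≤ c.length := by
                have h1 := c.length_pos_of_pos hwpos
                have h2 : c.length ≠ 1 := fun h =>
                  hc ((Composition.eq_single_iff_length hwpos).mpr h)
                omega
              have herase : p.length + (c.blocks.erase p.length).sum = c.blocks.sum :=
                List.sum_erase hb
              have hepos : 0 < (c.blocks.erase p.length).sum := by
                apply List.sum_pos
                · intro x hx; exact c.blocks_pos (List.mem_of_mem_erase hx)
                · have hle : (c.blocks.erase p.length).length = c.blocks.length - 1 :=
                    List.length_erase_of_mem hb
                  have hbl := c.blocks_length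
                  intro hnil
                  rw [hnil] at hle
                  simp at hle
                  omega
              have hbsum := c.blocks_sum
              omega
            have hSp : unitMould p - Carr p = 0 := ih p (by omega) hp0
            have hz : (0 : ℂ) ∈ (w.splitWrtComposition c).map
                (fun v => unitMould v - Carr v) := by
              rw [List.mem_map]; exact ⟨p, hpmem, hSp⟩
            rw [List.prod_eq_zero hz, mul_zero]
        · rw [hu, hCnr w hsum, sub_zero]
  intro w h2 hmem
  have h := key w.length w le_rfl hmem
  have hu : unitMould w = 0 := by
    simp only [unitMould, ite_eq_right_iff]
    intro h; omega
  rw [hu, zero_sub, neg_eq_zero] at h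
  exact h
end

section
/- The set L_d of isochronous centers of real polynomial perturbations of degree d of the linear center is an affine algebraic variety in ℂ^{N(d)}, defined over ℚ: there exist finitely many polynomials f₁,…,f_s with coefficients in ℚ(i) such that L_d = {p ∈ ℂ^{N(d)} : f_i(p) = 0 for all i}. -/
open MvPolynomial

/-- Any ideal generated by a set in a Noetherian ring is generated by a finite subset. -/
lemma exists_finset_subset_span_eq {R : Type*} [CommRing R] [IsNoetherianRing R] [DecidableEq R]
    (S : Set R) : ∃ U : Finset R, ↑U ⊆ S ∧ Ideal.span (U : Set R) = Ideal.span S := by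
  obtain ⟨T, hT⟩ := IsNoetherian.noetherian (Ideal.span S)
  -- For each t ∈ T, find a finite subset of S whose span contains t
  have h : ∀ t ∈ T, ∃ U : Finset R, ↑U ⊆ S ∧ t ∈ Ideal.span (U : Set R) := by
    intro t ht
    have : t ∈ Ideal.span S := by
      rw [← hT]; exact Ideal.subset_span ht
    exact Submodule.mem_span_finite_of_mem_span this
  choose u hu1 hu2 using h
  refine ⟨T.attach.biUnion (fun t => u t.1 t.2), ?_, ?_⟩
  · intro x hx
    simp only [Finset.coe_biUnion, Set.mem_iUnion, Finset.mem_coe] at hx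
    obtain ⟨t, _, hx⟩ := hx
    exact hu1 t.1 t.2 hx
  · apply le_antisymm
    · rw [Ideal.span_le]
      intro x hx
      simp only [Finset.coe_biUnion, Set.mem_iUnion, Finset.mem_coe] at hx
      obtain ⟨t, _, hx⟩ := hx
      exact Ideal.subset_span (hu1 t.1 t.2 hx)
    · rw [← hT, Submodule.span_le]
      intro t ht
      rw [Finset.mem_coe] at ht
      refine Ideal.span_mono ?_ (hu2 t ht)
      intro x hx
      simp only [Finset.coe_biUnion, Set.mem_iUnion, Finset.mem_coe]
      exact ⟨⟨t, ht⟩, Finset.mem_attach _ _, hx⟩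

/-- The set of isochronous centers `L_d ⊆ ℂ^{N(d)}` — the common zero set of the
correction coefficients `Ca_{2p}`, which are polynomials in the coefficients with
coefficients in `ℚ(i) = {a + b·i : a, b ∈ ℚ}` — is an affine algebraic variety defined
over `ℚ(i)`: there are finitely many polynomials `f₁,…,f_s` with coefficients in `ℚ(i)`
whose common zero set is exactly `L_d`. -/
theorem isochronous_centers_affine_variety (N : ℕ) (Ca : ℕ → MvPolynomial (Fin N) ℂ)
    (hCa : ∀ (n : ℕ) (m : Fin N →₀ ℕ),
      (Ca n).coeff m ∈ {z : ℂ | ∃ a b : ℚ, z = (a : ℂ) + (b : ℂ) * Complex.I}) :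
    ∃ (s : ℕ) (f : Fin s → MvPolynomial (Fin N) ℂ),
      (∀ (i : Fin s) (m : Fin N →₀ ℕ),
        (f i).coeff m ∈ {z : ℂ | ∃ a b : ℚ, z = (a : ℂ) + (b : ℂ) * Complex.I}) ∧
      {x : Fin N → ℂ | ∀ n : ℕ, MvPolynomial.eval x (Ca n) = 0} =
        {x : Fin N → ℂ | ∀ i : Fin s, MvPolynomial.eval x (f i) = 0} := by
  obtain ⟨U, hUS, hUspan⟩ := exists_finset_subset_span_eq (Set.range Ca)
  let e := U.equivFin
  refine ⟨U.card, fun i => (e.symm i : MvPolynomial (Fin N) ℂ), ?_, ?_⟩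
  · intro i m
    obtain ⟨n, hn⟩ := hUS (e.symm i).2
    simp only [← hn]
    exact hCa n m
  · ext x
    simp only [Set.mem_setOf_eq]
    constructor
    · intro hx i
      have hker : Ideal.span (Set.range Ca) ≤ RingHom.ker (MvPolynomial.eval x) := by
        rw [Ideal.span_le]
        rintro _ ⟨n, rfl⟩
        exact hx n
      exact hker (hUspan ▸ Ideal.subset_span (e.symm i).2)
    · intro hx n
      have hker : Ideal.span (U : Set (MvPolynomial (Fin N) ℂ)) ≤
          RingHom.ker (MvPolynomial.eval x) := by
        rw [Ideal.span_le]
        intro p hp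
        have := hx (e ⟨p, hp⟩)
        rwa [Equiv.symm_apply_apply] at this
      exact hker (hUspan ▸ Ideal.subset_span ⟨n, rfl⟩ :
        Ca n ∈ Ideal.span (U : Set (MvPolynomial (Fin N) ℂ)))
end
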